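/- (Dynamic entropic distance identity.) For every equivalent local martingale measure Q ∈ M_f, the conditional relative entropy processes satisfy I_t(Q|ℙ) − I_t(Q⁰|ℙ) = I_t(Q|Q⁰) for all 0 ≤ t ≤ T, where Q⁰ is the minimal entropy martingale measure. -/

import Mathlib

open MeasureTheory ProbabilityTheory Filter Real
open scoped ENNReal Topology

noncomputable section

/-- `X` is a local martingale: there is a localising sequence of stopping times
increasing to `+∞` such that each stopped process is a martingale. -/
def IsLocalMartingale {Ω : Type*} {mΩ : MeasurableSpace Ω} (ℱ : Filtration ℝ mΩ)
    (Q : Measure Ω) (X : ℝ → Ω → ℝ) : Prop :=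
  ∃ τ : ℕ → Ω → ℝ, (∀ n, IsStoppingTime ℱ (fun ω => ((τ n ω : ℝ) : WithTop ℝ))) ∧ (∀ ω, Monotone fun n => τ n ω) ∧
    (∀ᵐ ω ∂Q, Tendsto (fun n => τ n ω) atTop atTop) ∧
    ∀ n, Martingale (fun t ω => X (min t (τ n ω)) ω) ℱ Q

/-- The density process `Z^{Q,μ}_t = 𝔼^μ[dQ/dμ | F_t]` of `Q` with respect to `μ`. -/
def densProc {Ω : Type*} {mΩ : MeasurableSpace Ω} (ℱ : Filtration ℝ mΩ)
    (μ Q : Measure Ω) (t : ℝ) : Ω → ℝ :=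
  MeasureTheory.condExp (ℱ t) μ (fun ω => (Q.rnDeriv μ ω).toReal)

/-- The conditional relative entropy process
`I_t(Q|μ) = 𝔼^Q[log (Z^{Q,μ}_T / Z^{Q,μ}_t) | F_t]` between `Q` and `μ`. -/
def condRelEntropy {Ω : Type*} {mΩ : MeasurableSpace Ω} (ℱ : Filtration ℝ mΩ)
    (μ Q : Measure Ω) (T t : ℝ) : Ω → ℝ :=
  MeasureTheory.condExp (ℱ t) Q
    (fun ω => Real.log (densProc ℱ μ Q T ω / densProc ℱ μ Q t ω))

/-- The set `M_f` of equivalent local martingale measures for `S` with finite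
relative entropy with respect to `P`. -/
def Mf {Ω : Type*} {mΩ : MeasurableSpace Ω} (ℱ : Filtration ℝ mΩ) (P : Measure Ω)
    {d : ℕ} (S : ℝ → Ω → Fin d → ℝ) : Set (Measure Ω) :=
  {Q | IsProbabilityMeasure Q ∧ Q ≪ P ∧ P ≪ Q ∧
    (∀ i, IsLocalMartingale ℱ Q fun t ω => S t ω i) ∧
    Integrable (fun ω => Real.log ((Q.rnDeriv P ω).toReal)) Q}

/-- `Y` is (a version of) the essential supremum under `P` of the family `X i`. -/
def IsEssSupFam {Ω : Type*} {_ : MeasurableSpace Ω} {ι : Sort*} (P : Measure Ω)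
    (X : ι → Ω → ℝ) (Y : Ω → ℝ) : Prop :=
  (∀ i, X i ≤ᵐ[P] Y) ∧ ∀ Z : Ω → ℝ, (∀ i, X i ≤ᵐ[P] Z) → Y ≤ᵐ[P] Z

/-- `Y` is (a version of) the essential infimum under `P` of the family `X i`. -/
def IsEssInfFam {Ω : Type*} {_ : MeasurableSpace Ω} {ι : Sort*} (P : Measure Ω)
    (X : ι → Ω → ℝ) (Y : Ω → ℝ) : Prop :=
  (∀ i, Y ≤ᵐ[P] X i) ∧ ∀ Z : Ω → ℝ, (∀ i, Z ≤ᵐ[P] X i) → Z ≤ᵐ[P] Y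

section AuxEntropySection
set_option maxHeartbeats 2000000
namespace AuxEntropy
variable {Ω : Type*} {m : MeasurableSpace Ω} {mΩ : MeasurableSpace Ω}
variable {μ ν κ : Measure Ω}

lemma neg_inv_exp_le_mul_log {x : ℝ} (hx : 0 ≤ x) :
    -(Real.exp 1)⁻¹ ≤ x * Real.log x := by
  rcases hx.eq_or_lt with h | h
  · simp [← h, neg_nonpos, inv_nonneg, (Real.exp_pos 1).le]
  · have hxe : 0 < x * Real.exp 1 := mul_pos h (Real.exp_pos 1)
    have h1 : Real.log ((x * Real.exp 1)⁻¹) = -(Real.log x + 1) := by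
      rw [Real.log_inv, Real.log_mul (ne_of_gt h) (Real.exp_ne_zero 1), Real.log_exp]
    have h2 := Real.log_le_sub_one_of_pos (inv_pos.mpr hxe)
    rw [h1] at h2
    have h3 : (x * Real.exp 1)⁻¹ * (x * Real.exp 1) = 1 := inv_mul_cancel₀ (ne_of_gt hxe)
    have h4 : (Real.exp 1)⁻¹ * Real.exp 1 = 1 := inv_mul_cancel₀ (Real.exp_ne_zero 1)
    nlinarith [Real.exp_pos 1, inv_pos.mpr hxe, inv_pos.mpr (Real.exp_pos 1)]

lemma mul_log_support_line {a b : ℝ} (ha : 0 ≤ a) (hb : 0 < b) :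
    b * Real.log b + (Real.log b + 1) * (a - b) ≤ a * Real.log a := by
  rcases ha.eq_or_lt with h | h
  · rw [← h]; simp; nlinarith [Real.log_le_sub_one_of_pos hb]
  · have h1 := Real.log_le_sub_one_of_pos (div_pos hb h)
    rw [Real.log_div (ne_of_gt hb) (ne_of_gt h)] at h1
    have h2 : b / a * a = b := div_mul_cancel₀ _ (ne_of_gt h)
    nlinarith [h1, h]

lemma condexp_pos (hm : m ≤ mΩ) [IsFiniteMeasure μ] {f : Ω → ℝ}
    (hf : Integrable f μ) (hpos : ∀ᵐ ω ∂μ, 0 < f ω) :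
    ∀ᵐ ω ∂μ, 0 < (μ[f|m]) ω := by
  set g := μ[f|m] with hg
  have hgm : StronglyMeasurable[m] g := stronglyMeasurable_condExp
  have hAm : MeasurableSet[m] {ω | g ω ≤ 0} := hgm.measurable measurableSet_Iic
  set A := {ω | g ω ≤ 0} with hA
  have h1 : ∫ ω in A, f ω ∂μ = ∫ ω in A, g ω ∂μ := (setIntegral_condExp hm hf hAm).symm
  have h2 : ∫ ω in A, g ω ∂μ ≤ 0 := by
    refine integral_nonpos_of_ae ?_
    filter_upwards [ae_restrict_mem (hm _ hAm)] with ω hω using hω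
  have h3 : 0 ≤ ∫ ω in A, f ω ∂μ :=
    integral_nonneg_of_ae (ae_restrict_of_ae (hpos.mono fun ω h => h.le))
  have h4 : ∫ ω in A, f ω ∂μ = 0 := le_antisymm (h1 ▸ h2) h3
  have h5 : f =ᵐ[μ.restrict A] 0 :=
    (integral_eq_zero_iff_of_nonneg_ae (ae_restrict_of_ae (hpos.mono fun ω h => h.le))
      hf.integrableOn).mp h4
  have h6 : ∀ᵐ ω ∂μ.restrict A, False := by
    filter_upwards [h5, ae_restrict_of_ae hpos] with ω h h' using by
      simp only [Pi.zero_apply] at h; linarith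
  have h7 : μ.restrict A Set.univ = 0 := by
    simpa using (ae_iff.mp h6)
  have hA0 : μ A = 0 := by rwa [Measure.restrict_apply_univ] at h7
  rw [ae_iff]
  convert hA0 using 2
  ext ω; simp [hA, not_lt]


/-- The conditional density `Z = μ[dν/dμ | m]`. -/
def cd (hm : m ≤ mΩ) (μ ν : Measure Ω) : Ω → ℝ :=
  μ[fun ω => (ν.rnDeriv μ ω).toReal|m]

lemma cd_stronglyMeasurable (hm : m ≤ mΩ) : StronglyMeasurable[m] (cd hm μ ν) :=
  stronglyMeasurable_condExp

lemma integrable_dens [IsFiniteMeasure ν] :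
    Integrable (fun ω => (ν.rnDeriv μ ω).toReal) μ :=
  Measure.integrable_toReal_rnDeriv

lemma cd_integrable (hm : m ≤ mΩ) [IsFiniteMeasure ν] : Integrable (cd hm μ ν) μ :=
  integrable_condExp

lemma cd_nonneg (hm : m ≤ mΩ) [IsFiniteMeasure μ] [IsFiniteMeasure ν] :
    0 ≤ᵐ[μ] cd hm μ ν :=
  condExp_nonneg (Eventually.of_forall fun ω => ENNReal.toReal_nonneg)

lemma dens_pos [IsFiniteMeasure μ] [IsFiniteMeasure ν] (hμν : μ ≪ ν) :
    ∀ᵐ ω ∂μ, 0 < (ν.rnDeriv μ ω).toReal := by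
  filter_upwards [Measure.rnDeriv_pos' hμν, Measure.rnDeriv_ne_top ν μ] with ω h1 h2
  exact ENNReal.toReal_pos (ne_of_gt h1) h2

lemma cd_pos (hm : m ≤ mΩ) [IsFiniteMeasure μ] [IsFiniteMeasure ν]
    (hμν : μ ≪ ν) : ∀ᵐ ω ∂μ, 0 < cd hm μ ν ω :=
  condexp_pos hm integrable_dens (dens_pos hμν)

lemma setIntegral_cd (hm : m ≤ mΩ) [IsFiniteMeasure μ] [IsFiniteMeasure ν]
    (hνμ : ν ≪ μ) {A : Set Ω} (hA : MeasurableSet[m] A) :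
    ∫ ω in A, cd hm μ ν ω ∂μ = (ν A).toReal := by
  rw [cd, setIntegral_condExp hm integrable_dens hA,
    Measure.setIntegral_toReal_rnDeriv hνμ A, measureReal_def]

lemma trim_eq_withDensity_cd (hm : m ≤ mΩ) [IsFiniteMeasure μ] [IsFiniteMeasure ν]
    (hνμ : ν ≪ μ) :
    ν.trim hm = (μ.withDensity (fun ω => ENNReal.ofReal (cd hm μ ν ω))).trim hm := by
  refine @Measure.ext _ m _ _ (fun A hA => ?_)
  rw [trim_measurableSet_eq hm hA, trim_measurableSet_eq hm hA,
    withDensity_apply _ (hm _ hA)]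
  have h3 : ENNReal.ofReal (∫ ω in A, cd hm μ ν ω ∂μ)
      = ∫⁻ ω in A, ENNReal.ofReal (cd hm μ ν ω) ∂μ :=
    ofReal_integral_eq_lintegral_ofReal (cd_integrable hm).integrableOn
      (ae_restrict_of_ae (cd_nonneg hm))
  rw [← h3, setIntegral_cd hm hνμ hA, ENNReal.ofReal_toReal (measure_ne_top _ _)]

lemma lintegral_eq_lintegral_cd_mul (hm : m ≤ mΩ) [IsFiniteMeasure μ] [IsFiniteMeasure ν]
    (hνμ : ν ≪ μ) {g : Ω → ℝ≥0∞} (hg : Measurable[m] g) :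
    ∫⁻ ω, g ω ∂ν = ∫⁻ ω, ENNReal.ofReal (cd hm μ ν ω) * g ω ∂μ := by
  have hW : Measurable (fun ω => ENNReal.ofReal (cd hm μ ν ω)) :=
    ((cd_stronglyMeasurable hm).mono hm).measurable.ennreal_ofReal
  rw [← lintegral_trim hm hg, trim_eq_withDensity_cd hm hνμ, lintegral_trim hm hg,
    lintegral_withDensity_eq_lintegral_mul _ hW (hg.mono hm le_rfl)]
  simp only [Pi.mul_apply]

/-- pull-out: `∫ h * f dμ = ∫ h * μ[f|m] dμ` for bounded `m`-measurable `h`. -/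
lemma integral_mul_eq_integral_mul_condexp (hm : m ≤ mΩ) [IsFiniteMeasure μ]
    {f h : Ω → ℝ} (hf : Integrable f μ) (hh : StronglyMeasurable[m] h)
    {c : ℝ} (hbound : ∀ ω, |h ω| ≤ c) :
    ∫ ω, h ω * f ω ∂μ = ∫ ω, h ω * (μ[f|m]) ω ∂μ := by
  have hmul : μ[fun ω => h ω * f ω|m] =ᵐ[μ] fun ω => h ω * (μ[f|m]) ω :=
    condExp_stronglyMeasurable_mul_of_bound hm hh hf c (Eventually.of_forall hbound)
  have hint : Integrable (fun ω => h ω * f ω) μ :=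
    hf.bdd_mul  (hh.mono hm).aestronglyMeasurable (c := c) (Eventually.of_forall fun ω => by
      simpa [Real.norm_eq_abs] using hbound ω)
  calc ∫ ω, h ω * f ω ∂μ = ∫ ω, (μ[fun ω => h ω * f ω|m]) ω ∂μ :=
        (integral_condExp hm).symm
    _ = ∫ ω, h ω * (μ[f|m]) ω ∂μ := integral_congr_ae hmul

lemma lintegral_posPart_condexp_mul_log_lt_top (hm : m ≤ mΩ) [IsProbabilityMeasure μ]
    {f : Ω → ℝ} (hf : Integrable f μ) (hnn : 0 ≤ᵐ[μ] f)
    (hflog : Integrable (fun ω => f ω * Real.log (f ω)) μ) :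
    ∫⁻ ω, ENNReal.ofReal (max ((μ[f|m]) ω * Real.log ((μ[f|m]) ω)) 0) ∂μ < ∞ := by
  set Z := μ[f|m] with hZdef
  have hZsm : StronglyMeasurable[m] Z := stronglyMeasurable_condExp
  have hZm : Measurable[m] Z := hZsm.measurable
  have hZnn : 0 ≤ᵐ[μ] Z := condExp_nonneg hnn
  set Kr := ∫ ω, max (f ω * Real.log (f ω)) 0 ∂μ with hKr
  have hmaxint : Integrable (fun ω => max (f ω * Real.log (f ω)) 0) μ := hflog.pos_part
  -- the truncation sets
  set A : ℕ → Set Ω := fun n => Z ⁻¹' Set.Icc (Real.exp (-(n : ℝ))) (Real.exp n) with hAdef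
  have hAm : ∀ n, MeasurableSet[m] (A n) := fun n => hZm measurableSet_Icc
  have hAmono : Monotone A := by
    intro a b hab
    exact Set.preimage_mono (Set.Icc_subset_Icc
      (Real.exp_le_exp.mpr (by exact_mod_cast neg_le_neg (by exact_mod_cast hab)))
      (Real.exp_le_exp.mpr (by exact_mod_cast hab)))
  -- log bounds on A n
  have hlogbound : ∀ n, ∀ ω ∈ A n, |Real.log (Z ω)| ≤ (n : ℝ) := by
    intro n ω hω
    obtain ⟨h1, h2⟩ := hω
    have hzpos : 0 < Z ω := lt_of_lt_of_le (Real.exp_pos _) h1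
    rw [abs_le]
    constructor
    · rw [← Real.log_exp (-(n:ℝ))]; exact Real.log_le_log (Real.exp_pos _) h1
    · rw [← Real.log_exp (n:ℝ)]; exact Real.log_le_log hzpos h2
  -- the bounded m-measurable multiplier
  set h : ℕ → Ω → ℝ := fun n => (A n).indicator (fun ω => Real.log (Z ω) + 1) with hhdef
  have hhm : ∀ n, StronglyMeasurable[m] (h n) := fun n =>
    (((Real.measurable_log.comp hZm).add measurable_const).indicator (hAm n)).stronglyMeasurable
  have hhb : ∀ n, ∀ ω, |h n ω| ≤ (n : ℝ) + 1 := by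
    intro n ω
    by_cases hω : ω ∈ A n
    · simp only [hhdef, Set.indicator_of_mem hω]
      calc |Real.log (Z ω) + 1| ≤ |Real.log (Z ω)| + 1 := by
            simpa using abs_add_le (Real.log (Z ω)) 1
        _ ≤ (n : ℝ) + 1 := by linarith [hlogbound n ω hω]
    · simp [hhdef, Set.indicator_of_notMem hω]
      positivity
  -- the centered variable w with zero conditional expectation
  set w : Ω → ℝ := fun ω => f ω - Z ω with hwdef
  have hwint : Integrable w μ := hf.sub integrable_condExp
  have hw0 : μ[w|m] =ᵐ[μ] 0 := by
    have h1 : μ[w|m] =ᵐ[μ] μ[f|m] - μ[Z|m] := condExp_sub hf integrable_condExp m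
    have h2 : μ[Z|m] = Z := condExp_of_stronglyMeasurable hm hZsm integrable_condExp
    filter_upwards [h1] with ω hω
    simp only [Pi.zero_apply]
    rw [hω, h2]
    simp [hZdef]
  have hkey : ∀ n, ∫ ω, h n ω * w ω ∂μ = 0 := by
    intro n
    rw [integral_mul_eq_integral_mul_condexp hm hwint (hhm n) (hhb n)]
    rw [integral_congr_ae (g := fun _ => (0:ℝ)) ?_, integral_zero]
    filter_upwards [hw0] with ω hω
    rw [hω]; simp
  -- pointwise inequality: indicator (Z log Z) ≤ max (f log f) 0 - h n * w, a.e.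
  have hv1int : ∀ n : ℕ, Integrable ((A n).indicator (fun ω => Z ω * Real.log (Z ω))) μ := by
    intro n
    refine Integrable.mono' (integrable_const (Real.exp n * n)) ?_ ?_
    · exact (((((hZm.mono hm le_rfl)).mul
        (Real.measurable_log.comp (hZm.mono hm le_rfl))).indicator
        (hm _ (hAm n))).stronglyMeasurable).aestronglyMeasurable
    · refine Eventually.of_forall fun ω => ?_
      by_cases hω : ω ∈ A n
      · rw [Set.indicator_of_mem hω]
        have h1 : |Z ω| ≤ Real.exp n := by
          rw [abs_le]
          exact ⟨le_trans (by linarith [Real.exp_pos (-(n:ℝ)), Real.exp_pos (n:ℝ)]) hω.1, hω.2⟩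
        calc ‖Z ω * Real.log (Z ω)‖ = |Z ω| * |Real.log (Z ω)| := abs_mul _ _
          _ ≤ Real.exp n * n := by
              exact mul_le_mul h1 (hlogbound n ω hω) (abs_nonneg _) (Real.exp_pos _).le
      · rw [Set.indicator_of_notMem hω]
        simp; positivity
  have hwhint : ∀ n : ℕ, Integrable (fun ω => h n ω * w ω) μ := fun n =>
    hwint.bdd_mul ((hhm n).mono hm).aestronglyMeasurable (c := (n:ℝ)+1) (Eventually.of_forall fun ω => by
      simpa [Real.norm_eq_abs] using hhb n ω)
  have hptw : ∀ n : ℕ, ∀ᵐ ω ∂μ, (A n).indicator (fun ω => Z ω * Real.log (Z ω)) ω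
      ≤ max (f ω * Real.log (f ω)) 0 - h n ω * w ω := by
    intro n
    filter_upwards [hnn] with ω hfω
    by_cases hω : ω ∈ A n
    · rw [Set.indicator_of_mem hω, hhdef]
      simp only [Set.indicator_of_mem hω]
      have hzpos : 0 < Z ω := lt_of_lt_of_le (Real.exp_pos _) hω.1
      have := mul_log_support_line hfω hzpos
      have h2 : f ω * Real.log (f ω) ≤ max (f ω * Real.log (f ω)) 0 := le_max_left _ _
      simp only [hwdef]
      nlinarith
    · simp only [hhdef, Set.indicator_of_notMem hω, zero_mul, sub_zero]
      exact le_max_right _ _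
  have hs1 : ∀ n : ℕ, ∫ ω, (A n).indicator (fun ω => Z ω * Real.log (Z ω)) ω ∂μ ≤ Kr := by
    intro n
    have := integral_mono_ae (hv1int n) (hmaxint.sub (hwhint n)) (hptw n)
    simp only [Pi.sub_apply] at this
    rw [integral_sub hmaxint (hwhint n), hkey n, sub_zero] at this
    exact this
  -- bound the positive part over A n
  have hs2 : ∀ n : ℕ, ∫ ω, (A n).indicator (fun ω => max (Z ω * Real.log (Z ω)) 0) ω ∂μ
      ≤ Kr + (Real.exp 1)⁻¹ := by
    intro n
    have hint2 : Integrable ((A n).indicator (fun ω => max (Z ω * Real.log (Z ω)) 0)) μ := by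
      have := (hv1int n).pos_part
      refine this.congr (Eventually.of_forall fun ω => ?_)
      by_cases hω : ω ∈ A n <;> simp [Set.indicator_of_mem, Set.indicator_of_notMem, hω]
    have hptw2 : ∀ᵐ ω ∂μ, (A n).indicator (fun ω => max (Z ω * Real.log (Z ω)) 0) ω
        ≤ (A n).indicator (fun ω => Z ω * Real.log (Z ω)) ω + (Real.exp 1)⁻¹ := by
      filter_upwards [hZnn] with ω hZω
      by_cases hω : ω ∈ A n
      · rw [Set.indicator_of_mem hω, Set.indicator_of_mem hω]
        rcases max_cases (Z ω * Real.log (Z ω)) 0 with ⟨h1, _⟩ | ⟨h1, _⟩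
        · rw [h1]; linarith [inv_pos.mpr (Real.exp_pos 1)]
        · rw [h1]; linarith [neg_inv_exp_le_mul_log hZω]
      · rw [Set.indicator_of_notMem hω, Set.indicator_of_notMem hω]
        simp only [zero_add]
        positivity
    have := integral_mono_ae hint2 ((hv1int n).add (integrable_const _)) hptw2
    simp only [Pi.add_apply] at this
    rw [integral_add (hv1int n) (integrable_const _), integral_const] at this
    simp only [probReal_univ, measure_univ, ENNReal.toReal_one, one_smul, smul_eq_mul] at this
    linarith [hs1 n]
  -- convert to lintegral and take the supremum
  have hs3 : ∀ n : ℕ, ∫⁻ ω, ((A n).indicator (fun ω => ENNReal.ofReal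
      (max (Z ω * Real.log (Z ω)) 0))) ω ∂μ ≤ ENNReal.ofReal (Kr + (Real.exp 1)⁻¹) := by
    intro n
    have hint2 : Integrable ((A n).indicator (fun ω => max (Z ω * Real.log (Z ω)) 0)) μ := by
      have := (hv1int n).pos_part
      refine this.congr (Eventually.of_forall fun ω => ?_)
      by_cases hω : ω ∈ A n <;> simp [Set.indicator_of_mem, Set.indicator_of_notMem, hω]
    have heq : ∀ ω, ((A n).indicator (fun ω => ENNReal.ofReal
        (max (Z ω * Real.log (Z ω)) 0))) ω
        = ENNReal.ofReal (((A n).indicator (fun ω => max (Z ω * Real.log (Z ω)) 0)) ω) := by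
      intro ω
      by_cases hω : ω ∈ A n <;> simp [Set.indicator_of_mem, Set.indicator_of_notMem, hω]
    rw [lintegral_congr heq, ← ofReal_integral_eq_lintegral_ofReal hint2 ?_]
    · exact ENNReal.ofReal_le_ofReal (hs2 n)
    · refine Eventually.of_forall fun ω => ?_
      by_cases hω : ω ∈ A n <;>
        simp [Set.indicator_of_mem, Set.indicator_of_notMem, hω, le_max_right]
  -- monotone convergence
  have hmono : Monotone (fun n => ((A n).indicator (fun ω => ENNReal.ofReal
      (max (Z ω * Real.log (Z ω)) 0)))) := by
    intro a b hab
    exact Set.indicator_le_indicator_of_subset (hAmono hab) (fun ω => zero_le)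
  have hmeas : ∀ n, Measurable (fun ω => ((A n).indicator (fun ω => ENNReal.ofReal
      (max (Z ω * Real.log (Z ω)) 0))) ω) := by
    intro n
    exact (((((hZm.mono hm le_rfl)).mul
      (Real.measurable_log.comp (hZm.mono hm le_rfl))).max measurable_const).ennreal_ofReal).indicator
      (hm _ (hAm n))
  have hlim : ∀ᵐ ω ∂μ, ENNReal.ofReal (max (Z ω * Real.log (Z ω)) 0)
      = ⨆ n, ((A n).indicator (fun ω => ENNReal.ofReal (max (Z ω * Real.log (Z ω)) 0))) ω := by
    filter_upwards [hZnn] with ω hZω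
    rcases hZω.eq_or_lt with h0 | h0
    · have hnot : ∀ n, ω ∉ A n := by
        intro n hωA
        exact absurd (lt_of_lt_of_le (Real.exp_pos _) hωA.1) (by rw [← h0]; simp)
      simp only [fun n => Set.indicator_of_notMem (hnot n)
        (fun ω => ENNReal.ofReal (max (Z ω * Real.log (Z ω)) 0))]
      rw [← h0]
      simp
    · obtain ⟨N, hN1, hN2⟩ : ∃ N : ℕ, Real.exp (-(N:ℝ)) ≤ Z ω ∧ Z ω ≤ Real.exp N := by
        obtain ⟨N1, hN1⟩ := exists_nat_gt (1 / Z ω)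
        obtain ⟨N2, hN2⟩ := exists_nat_gt (Z ω)
        refine ⟨max N1 N2, ?_, ?_⟩
        · have h1 : (1:ℝ) / Z ω ≤ (max N1 N2 : ℕ) := by
            calc (1:ℝ)/Z ω ≤ N1 := hN1.le
              _ ≤ ((max N1 N2 : ℕ) : ℝ) := by exact_mod_cast Nat.le_max_left N1 N2
          rw [Real.exp_neg]
          rw [inv_le_comm₀ (Real.exp_pos _) h0]
          calc (Z ω)⁻¹ = 1 / Z ω := (one_div _).symm
            _ ≤ ((max N1 N2 : ℕ) : ℝ) := h1
            _ ≤ Real.exp ((max N1 N2 : ℕ) : ℝ) := by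
                linarith [Real.add_one_le_exp ((max N1 N2 : ℕ) : ℝ)]
        · calc Z ω ≤ N2 := hN2.le
            _ ≤ ((max N1 N2 : ℕ) : ℝ) := by exact_mod_cast Nat.le_max_right N1 N2
            _ ≤ Real.exp ((max N1 N2 : ℕ) : ℝ) := by
                linarith [Real.add_one_le_exp ((max N1 N2 : ℕ) : ℝ)]
      refine le_antisymm ?_ ?_
      · refine le_iSup_of_le N ?_
        rw [Set.indicator_of_mem (show ω ∈ A N from Set.mem_preimage.mpr (Set.mem_Icc.mpr ⟨hN1, hN2⟩))]
      · refine iSup_le fun n => ?_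
        by_cases hω : ω ∈ A n
        · rw [Set.indicator_of_mem hω]
        · rw [Set.indicator_of_notMem hω]; exact zero_le
  calc ∫⁻ ω, ENNReal.ofReal (max (Z ω * Real.log (Z ω)) 0) ∂μ
      = ∫⁻ ω, ⨆ n, ((A n).indicator (fun ω => ENNReal.ofReal
        (max (Z ω * Real.log (Z ω)) 0))) ω ∂μ := lintegral_congr_ae hlim
    _ = ⨆ n, ∫⁻ ω, ((A n).indicator (fun ω => ENNReal.ofReal
        (max (Z ω * Real.log (Z ω)) 0))) ω ∂μ := lintegral_iSup hmeas hmono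
    _ ≤ ENNReal.ofReal (Kr + (Real.exp 1)⁻¹) := iSup_le hs3
    _ < ∞ := ENNReal.ofReal_lt_top

lemma meas_ofReal_norm_log {δ : Type*} {mδ : MeasurableSpace δ} {Z : δ → ℝ}
    (h : Measurable Z) : Measurable fun ω => ENNReal.ofReal ‖Real.log (Z ω)‖ :=
  h.log.norm.ennreal_ofReal

/-- `f log f` is `μ`-integrable when `log f` is `ν`-integrable (`f = dν/dμ`). -/
lemma integrable_dens_mul_log [IsProbabilityMeasure μ] [IsProbabilityMeasure ν]
    (hνμ : ν ≪ μ)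
    (hlog : Integrable (fun ω => Real.log ((ν.rnDeriv μ ω).toReal)) ν) :
    Integrable (fun ω => (ν.rnDeriv μ ω).toReal
      * Real.log ((ν.rnDeriv μ ω).toReal)) μ := by
  have hmeas : Measurable (fun ω => (ν.rnDeriv μ ω).toReal) :=
    (Measure.measurable_rnDeriv ν μ).ennreal_toReal
  have hmeaslog : Measurable (fun ω => Real.log ((ν.rnDeriv μ ω).toReal)) :=
    Real.measurable_log.comp hmeas
  refine ⟨(hmeas.mul hmeaslog).aestronglyMeasurable, ?_⟩
  rw [hasFiniteIntegral_iff_norm]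
  have h1 : ∀ᵐ ω ∂μ, ENNReal.ofReal ‖(ν.rnDeriv μ ω).toReal
        * Real.log ((ν.rnDeriv μ ω).toReal)‖
      = ν.rnDeriv μ ω * ENNReal.ofReal ‖Real.log ((ν.rnDeriv μ ω).toReal)‖ := by
    filter_upwards [Measure.rnDeriv_ne_top ν μ] with ω hne
    rw [norm_mul, ENNReal.ofReal_mul (norm_nonneg _)]
    congr 1
    rw [Real.norm_eq_abs, abs_of_nonneg ENNReal.toReal_nonneg,
      ENNReal.ofReal_toReal hne]
  rw [lintegral_congr_ae h1,
    MeasureTheory.lintegral_rnDeriv_mul hνμ (hmeaslog.norm.ennreal_ofReal.aemeasurable)]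
  have := hlog.2
  rw [hasFiniteIntegral_iff_norm] at this
  exact this

/-- Key integrability: `log` of the conditional density is `ν`-integrable. -/
lemma integrable_log_cd (hm : m ≤ mΩ) [IsProbabilityMeasure μ] [IsProbabilityMeasure ν]
    (hνμ : ν ≪ μ) (hμν : μ ≪ ν)
    (hlog : Integrable (fun ω => Real.log ((ν.rnDeriv μ ω).toReal)) ν) :
    Integrable (fun ω => Real.log (cd hm μ ν ω)) ν := by
  set Z := cd hm μ ν with hZdef
  have hZm : Measurable[m] Z := (cd_stronglyMeasurable hm).measurable
  have hZnn : 0 ≤ᵐ[μ] Z := cd_nonneg hm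
  have hfin := lintegral_posPart_condexp_mul_log_lt_top (μ := μ) hm integrable_dens
    (Eventually.of_forall fun ω => ENNReal.toReal_nonneg)
    (integrable_dens_mul_log hνμ hlog)
  refine ⟨Measurable.aestronglyMeasurable (μ := ν)
    (Real.measurable_log.comp ((cd_stronglyMeasurable hm).mono hm).measurable), ?_⟩
  rw [hasFiniteIntegral_iff_norm]
  have hlchange := lintegral_eq_lintegral_cd_mul hm hνμ
    (g := fun ω => ENNReal.ofReal ‖Real.log (Z ω)‖)
    (meas_ofReal_norm_log hZm)
  rw [hlchange]
  have hbound : ∀ᵐ ω ∂μ, ENNReal.ofReal (Z ω) * ENNReal.ofReal ‖Real.log (Z ω)‖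
      ≤ ENNReal.ofReal (max (Z ω * Real.log (Z ω)) 0) + ENNReal.ofReal (Real.exp 1)⁻¹ := by
    filter_upwards [hZnn] with ω hZω
    rw [← ENNReal.ofReal_mul hZω, ← ENNReal.ofReal_add (le_max_right _ _)
      (by positivity)]
    refine ENNReal.ofReal_le_ofReal ?_
    rw [Real.norm_eq_abs]
    rcases abs_cases (Real.log (Z ω)) with ⟨ha, _⟩ | ⟨ha, _⟩
    · rw [ha]
      linarith [le_max_left (Z ω * Real.log (Z ω)) 0, inv_pos.mpr (Real.exp_pos 1)]
    · rw [ha, mul_neg]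
      linarith [neg_inv_exp_le_mul_log hZω, le_max_right (Z ω * Real.log (Z ω)) 0]
  calc ∫⁻ ω, ENNReal.ofReal (Z ω) * ENNReal.ofReal ‖Real.log (Z ω)‖ ∂μ
      ≤ ∫⁻ ω, (ENNReal.ofReal (max (Z ω * Real.log (Z ω)) 0)
          + ENNReal.ofReal (Real.exp 1)⁻¹) ∂μ := lintegral_mono_ae hbound
    _ = (∫⁻ ω, ENNReal.ofReal (max (Z ω * Real.log (Z ω)) 0) ∂μ)
          + ENNReal.ofReal (Real.exp 1)⁻¹ := by
        rw [lintegral_add_right _ measurable_const, lintegral_const]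
        simp
    _ < ∞ := by
        exact ENNReal.add_lt_top.mpr ⟨hfin, ENNReal.ofReal_lt_top⟩


/-- Bayes-type product rule for conditional densities:
`Z^{ν,κ} * Z^{κ,μ} = Z^{ν,μ}` a.e. -/
lemma cd_mul_cd (hm : m ≤ mΩ) [IsProbabilityMeasure μ] [IsProbabilityMeasure ν]
    [IsProbabilityMeasure κ] (hνκ : ν ≪ κ) (hκμ : κ ≪ μ) (hμκ : μ ≪ κ) :
    (fun ω => cd hm κ ν ω * cd hm μ κ ω) =ᵐ[μ] cd hm μ ν := by
  have hνμ : ν ≪ μ := hνκ.trans hκμ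
  set Z' := cd hm κ ν with hZ'def
  set Z0 := cd hm μ κ with hZ0def
  have hZ'm : StronglyMeasurable[m] Z' := cd_stronglyMeasurable hm
  have hZ0m : StronglyMeasurable[m] Z0 := cd_stronglyMeasurable hm
  have hZ'nnμ : 0 ≤ᵐ[μ] Z' := (cd_nonneg (ν := ν) hm).filter_mono hμκ.ae_le
  have hZ0nn : 0 ≤ᵐ[μ] Z0 := cd_nonneg hm
  -- the key lintegral identity over m-measurable sets
  have hlkey : ∀ A : Set Ω, MeasurableSet[m] A →
      ∫⁻ ω in A, ENNReal.ofReal (Z' ω * Z0 ω) ∂μ = ENNReal.ofReal ((ν A).toReal) := by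
    intro A hA
    have hgm : Measurable[m] (A.indicator fun ω => ENNReal.ofReal (Z' ω)) :=
      (hZ'm.measurable.ennreal_ofReal).indicator hA
    have h1 := lintegral_eq_lintegral_cd_mul hm hκμ hgm
    have h2 : ∫⁻ ω, (A.indicator fun ω => ENNReal.ofReal (Z' ω)) ω ∂κ
        = ∫⁻ ω in A, ENNReal.ofReal (Z' ω) ∂κ := lintegral_indicator (hm _ hA) _
    have h3 : ∫⁻ ω in A, ENNReal.ofReal (Z' ω) ∂κ
        = ENNReal.ofReal (∫ ω in A, Z' ω ∂κ) := by
      rw [ofReal_integral_eq_lintegral_ofReal (cd_integrable hm).integrableOn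
        (ae_restrict_of_ae (cd_nonneg hm))]
    have h4 : ∫ ω in A, Z' ω ∂κ = (ν A).toReal := setIntegral_cd hm hνκ hA
    have h5 : ∫⁻ ω, ENNReal.ofReal (Z0 ω) * (A.indicator fun ω => ENNReal.ofReal (Z' ω)) ω ∂μ
        = ∫⁻ ω in A, ENNReal.ofReal (Z' ω * Z0 ω) ∂μ := by
      rw [← lintegral_indicator (hm _ hA) _]
      refine lintegral_congr_ae ?_
      filter_upwards [hZ'nnμ, hZ0nn] with ω h1' h2'
      by_cases hω : ω ∈ A
      · simp only [Set.indicator_of_mem hω]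
        rw [ENNReal.ofReal_mul h1', mul_comm]
      · simp [Set.indicator_of_notMem hω]
    rw [← h5, ← h1, h2, h3, h4]
  -- global integrability of the product
  have hgint : Integrable (fun ω => Z' ω * Z0 ω) μ := by
    refine ⟨((hZ'm.mul hZ0m).mono hm).aestronglyMeasurable, ?_⟩
    rw [hasFiniteIntegral_iff_norm]
    have : ∫⁻ ω, ENNReal.ofReal ‖Z' ω * Z0 ω‖ ∂μ
        = ∫⁻ ω in Set.univ, ENNReal.ofReal (Z' ω * Z0 ω) ∂μ := by
      rw [Measure.restrict_univ]
      refine lintegral_congr_ae ?_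
      filter_upwards [hZ'nnμ, hZ0nn] with ω h1 h2
      rw [Real.norm_eq_abs, abs_of_nonneg (mul_nonneg h1 h2)]
    rw [this, hlkey Set.univ MeasurableSet.univ]
    exact ENNReal.ofReal_lt_top
  refine ae_eq_condExp_of_forall_setIntegral_eq hm integrable_dens
    (fun s _ _ => hgint.integrableOn) (fun s hs _ => ?_)
    ((hZ'm.mul hZ0m).aestronglyMeasurable)
  rw [Measure.setIntegral_toReal_rnDeriv hνμ s]
  have hnn : 0 ≤ᵐ[μ.restrict s] fun ω => Z' ω * Z0 ω := by
    refine ae_restrict_of_ae ?_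
    filter_upwards [hZ'nnμ, hZ0nn] with ω h1 h2 using mul_nonneg h1 h2
  have h6 : ENNReal.ofReal (∫ ω in s, Z' ω * Z0 ω ∂μ)
      = ∫⁻ ω in s, ENNReal.ofReal (Z' ω * Z0 ω) ∂μ :=
    ofReal_integral_eq_lintegral_ofReal hgint.integrableOn hnn
  rw [hlkey s hs] at h6
  have h7 : 0 ≤ ∫ ω in s, Z' ω * Z0 ω ∂μ := integral_nonneg_of_ae hnn
  have := ENNReal.ofReal_eq_ofReal_iff h7 ENNReal.toReal_nonneg |>.mp h6
  exact this


end AuxEntropy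

end AuxEntropySection

open AuxEntropy

set_option maxHeartbeats 2000000 in
/-- Proposition 4.7: dynamic entropic distance identity. For
every `Q ∈ M_f`, `I_t(Q|P) - I_t(Q⁰|P) = I_t(Q|Q⁰)` for all `t ∈ [0,T]`, where
`Q⁰` is the minimal entropy martingale measure, whose density process admits the
dynamic Grandits–Rheinländer representation
`Z^{Q⁰}_T/Z^{Q⁰}_t = exp(I_t(Q⁰|P) - α ∫_t^T θ⁰·dS)` with `θ⁰·S` (encoded as the
gains process `G`) a `Q`-martingale for every `Q ∈ M_f`. -/
theorem dynamic_entropic_distance_identity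
    {Ω : Type*} {mΩ : MeasurableSpace Ω} (P : Measure Ω) [IsProbabilityMeasure P]
    (T : ℝ) (hT : 0 < T)
    (ℱ : Filtration ℝ mΩ) (hF0 : ℱ 0 = ⊥) (hFT : ℱ T = mΩ)
    {d : ℕ} (S : ℝ → Ω → Fin d → ℝ) (hSadapted : Adapted ℱ S)
    (hSpos : ∀ t ω i, 0 < S t ω i)
    (hMf : (Mf ℱ P S).Nonempty)
    (α : ℝ) (hα : 0 < α)
    -- `Q0` : the minimal entropy martingale measure
    (Q0 : Measure Ω) (hQ0mem : Q0 ∈ Mf ℱ P S)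
    (hQ0memm : ∀ Q ∈ Mf ℱ P S,
      ∫ ω, Real.log ((Q0.rnDeriv P ω).toReal) ∂Q0
        ≤ ∫ ω, Real.log ((Q.rnDeriv P ω).toReal) ∂Q)
    -- the dynamic Grandits–Rheinländer representation of `Q0`, with gains process
    -- `G = θ⁰·S` a `Q`-martingale for every `Q ∈ M_f`
    (G : ℝ → Ω → ℝ) (hGmart : ∀ Q ∈ Mf ℱ P S, Martingale G ℱ Q)
    (hGR : ∀ t ∈ Set.Icc (0:ℝ) T,
      (fun ω => densProc ℱ P Q0 T ω / densProc ℱ P Q0 t ω)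
        =ᵐ[P] fun ω => Real.exp (condRelEntropy ℱ P Q0 T t ω
          - α * (G T ω - G t ω))) :
    ∀ Q ∈ Mf ℱ P S, ∀ t ∈ Set.Icc (0:ℝ) T,
      (fun ω => condRelEntropy ℱ P Q T t ω - condRelEntropy ℱ P Q0 T t ω)
        =ᵐ[P] condRelEntropy ℱ Q0 Q T t := by
  intro Q hQ t ht
  have hQmem := hQ
  obtain ⟨hQprob, hQP, hPQ, -, hQlog⟩ := hQ
  obtain ⟨hQ0prob, hQ0P, hPQ0, -, hQ0log⟩ := hQ0mem
  haveI := hQprob; haveI := hQ0prob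
  have hQQ0 : Q ≪ Q0 := hQP.trans hPQ0
  have hQ0Q : Q0 ≪ Q := hQ0P.trans hPQ
  have hm : ℱ t ≤ mΩ := ℱ.le t
  -- shorthand for the densities
  set fQ : Ω → ℝ := fun ω => (Q.rnDeriv P ω).toReal with hfQdef
  set f0 : Ω → ℝ := fun ω => (Q0.rnDeriv P ω).toReal with hf0def
  set f' : Ω → ℝ := fun ω => (Q.rnDeriv Q0 ω).toReal with hf'def
  -- terminal values of the density processes
  have hZQT : densProc ℱ P Q T = fQ := by
    rw [densProc, hFT]
    exact condExp_of_stronglyMeasurable le_rfl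
      ((Measure.measurable_rnDeriv Q P).ennreal_toReal.stronglyMeasurable)
      integrable_dens
  have hZ0T : densProc ℱ P Q0 T = f0 := by
    rw [densProc, hFT]
    exact condExp_of_stronglyMeasurable le_rfl
      ((Measure.measurable_rnDeriv Q0 P).ennreal_toReal.stronglyMeasurable)
      integrable_dens
  have hZ'T : densProc ℱ Q0 Q T = f' := by
    rw [densProc, hFT]
    exact condExp_of_stronglyMeasurable le_rfl
      ((Measure.measurable_rnDeriv Q Q0).ennreal_toReal.stronglyMeasurable)
      integrable_dens
  -- positivity facts, a.e. w.r.t. P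
  have hfQpos : ∀ᵐ ω ∂P, 0 < fQ ω := dens_pos hPQ
  have hf0pos : ∀ᵐ ω ∂P, 0 < f0 ω := dens_pos hPQ0
  have hf'pos : ∀ᵐ ω ∂P, 0 < f' ω := (dens_pos hQ0Q).filter_mono hPQ0.ae_le
  have hZQt_pos : ∀ᵐ ω ∂P, 0 < densProc ℱ P Q t ω := cd_pos hm hPQ
  have hZ0t_pos : ∀ᵐ ω ∂P, 0 < densProc ℱ P Q0 t ω := cd_pos hm hPQ0
  have hZ't_pos : ∀ᵐ ω ∂P, 0 < densProc ℱ Q0 Q t ω :=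
    (cd_pos hm hQ0Q).filter_mono hPQ0.ae_le
  -- martingale facts for G under Q
  have hGmartQ : Martingale G ℱ Q := hGmart Q hQmem
  have hGT_int : Integrable (G T) Q := hGmartQ.integrable T
  have hGt_int : Integrable (G t) Q := hGmartQ.integrable t
  have hG0_int : Integrable (G 0) Q := hGmartQ.integrable 0
  have hGcond : Q[G T|ℱ t] =ᵐ[Q] G t := hGmartQ.condExp_ae_eq ht.2
  have hGt_ce : Q[G t|ℱ t] = G t :=
    condExp_of_stronglyMeasurable hm (hGmartQ.stronglyAdapted t) hGt_int
  -- the representation at time 0 : log f0 is, up to a constant, a martingale increment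
  have hZ00 : densProc ℱ P Q0 0 = fun _ => (1:ℝ) := by
    rw [densProc, hF0, condExp_bot]
    have : ∫ ω, (Q0.rnDeriv P ω).toReal ∂P = (Q0 Set.univ).toReal :=
      Measure.integral_toReal_rnDeriv hQ0P
    rw [this]; simp
  obtain ⟨c, hI00⟩ : ∃ c : ℝ, condRelEntropy ℱ P Q0 T 0 = fun _ => c := by
    rw [condRelEntropy, hF0, condExp_bot]
    exact ⟨_, rfl⟩
  have hlogf0 : (fun ω => Real.log (f0 ω))
      =ᵐ[P] fun ω => c - α * (G T ω - G 0 ω) := by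
    filter_upwards [hGR 0 ⟨le_refl 0, hT.le⟩] with ω hω
    rw [hZ0T, hZ00, hI00] at hω
    simp only [div_one] at hω
    rw [hω, Real.log_exp]
  have hlogf0_int : Integrable (fun ω => Real.log (f0 ω)) Q := by
    refine Integrable.congr ?_ (hlogf0.filter_mono hQP.ae_le).symm
    exact (integrable_const c).sub ((hGT_int.sub hG0_int).const_mul α)
  -- chain rule for densities and logs
  have hchain : (fun ω => f' ω * f0 ω) =ᵐ[P] fQ := by
    filter_upwards [Measure.rnDeriv_mul_rnDeriv hQQ0] with ω hω
    calc f' ω * f0 ω = ((Q.rnDeriv Q0 * Q0.rnDeriv P) ω).toReal := by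
          simp [hf'def, hf0def, ENNReal.toReal_mul]
      _ = fQ ω := by rw [hω]
  have hlogf' : (fun ω => Real.log (f' ω))
      =ᵐ[P] fun ω => Real.log (fQ ω) - Real.log (f0 ω) := by
    filter_upwards [hchain, hf'pos, hf0pos] with ω h1 h2 h3
    rw [← h1, Real.log_mul (ne_of_gt h2) (ne_of_gt h3)]
    ring
  have hlogf'_int : Integrable (fun ω => Real.log (f' ω)) Q :=
    Integrable.congr (hQlog.sub hlogf0_int) (hlogf'.filter_mono hQP.ae_le).symm
  -- integrability of the log conditional densities at time t, under Q
  have hlogZQt_int : Integrable (fun ω => Real.log (densProc ℱ P Q t ω)) Q :=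
    integrable_log_cd hm hQP hPQ hQlog
  have hlogZ't_int : Integrable (fun ω => Real.log (densProc ℱ Q0 Q t ω)) Q :=
    integrable_log_cd hm hQQ0 hQ0Q hlogf'_int
  -- Bayes rule for the time-t densities
  have hbayes : (fun ω => densProc ℱ Q0 Q t ω * densProc ℱ P Q0 t ω)
      =ᵐ[P] densProc ℱ P Q t := cd_mul_cd hm hQQ0 hQ0P hPQ0
  have hlogZ0t : (fun ω => Real.log (densProc ℱ P Q0 t ω))
      =ᵐ[P] fun ω => Real.log (densProc ℱ P Q t ω)
        - Real.log (densProc ℱ Q0 Q t ω) := by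
    filter_upwards [hbayes, hZ't_pos, hZ0t_pos] with ω h1 h2 h3
    rw [← h1, Real.log_mul (ne_of_gt h2) (ne_of_gt h3)]
    ring
  have hlogZ0t_int : Integrable (fun ω => Real.log (densProc ℱ P Q0 t ω)) Q :=
    Integrable.congr (hlogZQt_int.sub hlogZ't_int) (hlogZ0t.filter_mono hQP.ae_le).symm
  -- the three log-ratio variables
  set X0 : Ω → ℝ := fun ω => Real.log (densProc ℱ P Q0 T ω / densProc ℱ P Q0 t ω)
    with hX0def
  set X' : Ω → ℝ := fun ω => Real.log (densProc ℱ Q0 Q T ω / densProc ℱ Q0 Q t ω)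
    with hX'def
  set XQ : Ω → ℝ := fun ω => Real.log (densProc ℱ P Q T ω / densProc ℱ P Q t ω)
    with hXQdef
  have hX0_eq : X0 =ᵐ[P] fun ω => Real.log (f0 ω)
      - Real.log (densProc ℱ P Q0 t ω) := by
    filter_upwards [hf0pos, hZ0t_pos] with ω h1 h2
    rw [hX0def]
    simp only [hZ0T]
    rw [Real.log_div (ne_of_gt h1) (ne_of_gt h2)]
  have hX'_eq : X' =ᵐ[P] fun ω => Real.log (f' ω)
      - Real.log (densProc ℱ Q0 Q t ω) := by
    filter_upwards [hf'pos, hZ't_pos] with ω h1 h2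
    rw [hX'def]
    simp only [hZ'T]
    rw [Real.log_div (ne_of_gt h1) (ne_of_gt h2)]
  have hXQ_eq : XQ =ᵐ[P] fun ω => Real.log (fQ ω)
      - Real.log (densProc ℱ P Q t ω) := by
    filter_upwards [hfQpos, hZQt_pos] with ω h1 h2
    rw [hXQdef]
    simp only [hZQT]
    rw [Real.log_div (ne_of_gt h1) (ne_of_gt h2)]
  have hX0_int : Integrable X0 Q :=
    Integrable.congr (hlogf0_int.sub hlogZ0t_int) (hX0_eq.filter_mono hQP.ae_le).symm
  have hX'_int : Integrable X' Q :=
    Integrable.congr (hlogf'_int.sub hlogZ't_int) (hX'_eq.filter_mono hQP.ae_le).symm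
  -- the additive decomposition XQ = X' + X0
  have hsum : XQ =ᵐ[P] X' + X0 := by
    filter_upwards [hX0_eq, hX'_eq, hXQ_eq, hlogf', hlogZ0t] with ω h1 h2 h3 h4 h5
    simp only [Pi.add_apply]
    rw [h1, h2, h3, h4, h5]
    ring
  -- the conditional relative entropy I0 is integrable under Q
  set I0 : Ω → ℝ := condRelEntropy ℱ P Q0 T t with hI0def
  have hI0sm : StronglyMeasurable[ℱ t] I0 := stronglyMeasurable_condExp
  have h1rep : X0 =ᵐ[P] fun ω => I0 ω - α * (G T ω - G t ω) := by
    filter_upwards [hGR t ht] with ω hω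
    rw [hX0def]
    simp only []
    rw [hω, Real.log_exp, hI0def]
  have hI0_int : Integrable I0 Q := by
    refine Integrable.congr (hX0_int.add ((hGT_int.sub hGt_int).const_mul α)) ?_
    refine EventuallyEq.symm ?_
    filter_upwards [h1rep.filter_mono hQP.ae_le] with ω hω
    simp only [Pi.add_apply, Pi.sub_apply]
    linarith [hω]
  -- key identity 1 : Q[X0 | F_t] = I0
  have h1rep' : X0 =ᵐ[Q] I0 - α • (G T - G t) := by
    filter_upwards [h1rep.filter_mono hQP.ae_le] with ω hω
    simpa [Pi.sub_apply, Pi.smul_apply, smul_eq_mul] using hω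
  have k1a : Q[X0|ℱ t] =ᵐ[Q] Q[I0 - α • (G T - G t)|ℱ t] := condExp_congr_ae h1rep'
  have k1b := condExp_sub (μ := Q) (m := ℱ t) hI0_int ((hGT_int.sub hGt_int).smul α)
  have k1c := condExp_smul (μ := Q) (m := ℱ t) α (G T - G t)
  have k1d := condExp_sub (μ := Q) (m := ℱ t) hGT_int hGt_int
  have e3 : Q[I0|ℱ t] = I0 :=
    condExp_of_stronglyMeasurable hm hI0sm hI0_int
  have key1 : Q[X0|ℱ t] =ᵐ[Q] I0 := by
    filter_upwards [k1a, k1b, k1c, k1d, hGcond] with ω ha hb hc hd he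
    rw [ha, hb]
    simp only [Pi.sub_apply, Pi.smul_apply, smul_eq_mul] at hc hd ⊢
    rw [congrFun e3 ω, hc, hd, he, congrFun hGt_ce ω]
    ring
  -- key identity 2 : Q[XQ | F_t] = Q[X' | F_t] + Q[X0 | F_t]
  have hsum' : XQ =ᵐ[Q] X' + X0 := (hsum.filter_mono hQP.ae_le)
  have k2a : Q[XQ|ℱ t] =ᵐ[Q] Q[X' + X0|ℱ t] := condExp_congr_ae hsum'
  have k2b := condExp_add (μ := Q) (m := ℱ t) hX'_int hX0_int
  -- conclusion
  have final : ∀ᵐ ω ∂Q, (Q[XQ|ℱ t]) ω - I0 ω = (Q[X'|ℱ t]) ω := by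
    filter_upwards [key1, k2a, k2b] with ω h1 h2 h3
    rw [h2, h3]
    simp only [Pi.add_apply]
    rw [h1]
    ring
  have finalP : ∀ᵐ ω ∂P, (Q[XQ|ℱ t]) ω - I0 ω = (Q[X'|ℱ t]) ω :=
    final.filter_mono hPQ.ae_le
  exact finalP
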